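/- Restricted to nonempty patterns of positive conjunctive support, f_bond satisfies the three closure-operator axioms: (extensivity) X ⊆ f_bond(X) for every X ⊆ ℐ; (isotonie) if X ⊆ X' ⊆ ℐ with X nonempty and Supp(∧X') > 0, then f_bond(X) ⊆ f_bond(X'); (idempotence) if X ⊆ ℐ is nonempty with Supp(∧X) > 0, then f_bond(f_bond(X)) = f_bond(X). -/
import Mathlib


open Finset

variable {τ ι : Type*} [DecidableEq ι]

/-- Conjunctive support: number of transactions containing the whole pattern. -/
def suppConj (T : Finset τ) (items : τ → Finset ι) (X : Finset ι) : ℕ :=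
  (T.filter fun t => X ⊆ items t).card

/-- Disjunctive support: number of transactions containing at least one item of the pattern. -/
def suppDisj (T : Finset τ) (items : τ → Finset ι) (X : Finset ι) : ℕ :=
  (T.filter fun t => (X ∩ items t).Nonempty).card

/-- The bond measure (division by zero in `ℚ` yields `0`, matching the convention). -/
def bond (T : Finset τ) (items : τ → Finset ι) (X : Finset ι) : ℚ :=
  (suppConj T items X : ℚ) / (suppDisj T items X : ℚ)

/-- The closure operator associated with the bond measure:
`f_bond(X) = X ∪ {i ∈ ℐ \ X : bond (X ∪ {i}) = bond X}`. -/
def fbond (T : Finset τ) (items : τ → Finset ι) (I : Finset ι) (X : Finset ι) : Finset ι :=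
  X ∪ (I \ X).filter fun i => bond T items (insert i X) = bond T items X

lemma qlemma {c c' d d' : ℕ} (hc : c' ≤ c) (hd : d ≤ d') (hc0 : 0 < c) (hd0 : 0 < d)
    (h : (c' : ℚ) / d' = (c : ℚ) / d) : c' = c ∧ d' = d := by
  have hd'0 : 0 < d' := lt_of_lt_of_le hd0 hd
  rw [div_eq_div_iff (by exact_mod_cast hd'0.ne') (by exact_mod_cast hd0.ne')] at h
  have hnat : c' * d = c * d' := by exact_mod_cast h
  constructor <;> nlinarith

lemma suppConj_anti (T : Finset τ) (items : τ → Finset ι) {X X' : Finset ι} (h : X ⊆ X') :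
    suppConj T items X' ≤ suppConj T items X := by
  apply card_le_card
  intro t ht
  simp only [mem_filter] at ht ⊢
  exact ⟨ht.1, h.trans ht.2⟩

lemma suppDisj_mono (T : Finset τ) (items : τ → Finset ι) {X X' : Finset ι} (h : X ⊆ X') :
    suppDisj T items X ≤ suppDisj T items X' := by
  apply card_le_card
  intro t ht
  simp only [mem_filter] at ht ⊢
  obtain ⟨x, hx⟩ := ht.2
  simp only [mem_inter] at hx
  exact ⟨ht.1, ⟨x, mem_inter.2 ⟨h hx.1, hx.2⟩⟩⟩

lemma suppConj_le_suppDisj (T : Finset τ) (items : τ → Finset ι) {X : Finset ι}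
    (hX : X.Nonempty) : suppConj T items X ≤ suppDisj T items X := by
  apply card_le_card
  intro t ht
  simp only [mem_filter] at ht ⊢
  obtain ⟨x, hx⟩ := hX
  exact ⟨ht.1, ⟨x, mem_inter.2 ⟨hx, ht.2 hx⟩⟩⟩

lemma conj_eq_iff (T : Finset τ) (items : τ → Finset ι) (X : Finset ι) (i : ι) :
    suppConj T items (insert i X) = suppConj T items X ↔
      ∀ t ∈ T, X ⊆ items t → i ∈ items t := by
  constructor
  · intro h t ht hXt
    have hsub : T.filter (fun t => insert i X ⊆ items t) ⊆ T.filter (fun t => X ⊆ items t) := by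
      intro s hs
      simp only [mem_filter] at hs ⊢
      exact ⟨hs.1, (subset_insert i X).trans hs.2⟩
    have heq := eq_of_subset_of_card_le hsub h.ge
    have hmem : t ∈ T.filter (fun t => insert i X ⊆ items t) := by
      rw [heq]; simp only [mem_filter]; exact ⟨ht, hXt⟩
    simp only [mem_filter, insert_subset_iff] at hmem
    exact hmem.2.1
  · intro h
    unfold suppConj
    congr 1
    apply filter_congr
    intro t ht
    simp only [insert_subset_iff]
    exact ⟨fun h' => h'.2, fun h' => ⟨h t ht h', h'⟩⟩

lemma inter_insert_nonempty_iff {X s : Finset ι} {i : ι} :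
    (insert i X ∩ s).Nonempty ↔ i ∈ s ∨ (X ∩ s).Nonempty := by
  simp only [Finset.Nonempty, mem_inter, mem_insert]
  constructor
  · rintro ⟨x, hx | hx, hs⟩
    · exact Or.inl (hx ▸ hs)
    · exact Or.inr ⟨x, hx, hs⟩
  · rintro (hi | ⟨x, hx, hs⟩)
    · exact ⟨i, Or.inl rfl, hi⟩
    · exact ⟨x, Or.inr hx, hs⟩

lemma disj_eq_iff (T : Finset τ) (items : τ → Finset ι) (X : Finset ι) (i : ι) :
    suppDisj T items (insert i X) = suppDisj T items X ↔
      ∀ t ∈ T, i ∈ items t → (X ∩ items t).Nonempty := by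
  constructor
  · intro h t ht hit
    have hsub : T.filter (fun t => (X ∩ items t).Nonempty) ⊆
        T.filter (fun t => (insert i X ∩ items t).Nonempty) := by
      intro s hs
      simp only [mem_filter] at hs ⊢
      exact ⟨hs.1, inter_insert_nonempty_iff.2 (Or.inr hs.2)⟩
    have heq := eq_of_subset_of_card_le hsub h.le
    have hmem : t ∈ T.filter (fun t => (X ∩ items t).Nonempty) := by
      rw [heq]; simp only [mem_filter]
      exact ⟨ht, inter_insert_nonempty_iff.2 (Or.inl hit)⟩
    exact (mem_filter.1 hmem).2
  · intro h
    unfold suppDisj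
    congr 1
    apply filter_congr
    intro t ht
    rw [inter_insert_nonempty_iff]
    exact ⟨fun h' => h'.elim (h t ht) id, Or.inr⟩

lemma bond_eq_iff (T : Finset τ) (items : τ → Finset ι) {X : Finset ι} (i : ι)
    (hX : X.Nonempty) (hc : 0 < suppConj T items X) :
    bond T items (insert i X) = bond T items X ↔
      (∀ t ∈ T, X ⊆ items t → i ∈ items t) ∧
      (∀ t ∈ T, i ∈ items t → (X ∩ items t).Nonempty) := by
  have hd : 0 < suppDisj T items X := lt_of_lt_of_le hc (suppConj_le_suppDisj T items hX)
  constructor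
  · intro h
    obtain ⟨h1, h2⟩ := qlemma (suppConj_anti T items (subset_insert i X))
      (suppDisj_mono T items (subset_insert i X)) hc hd h
    exact ⟨(conj_eq_iff T items X i).1 h1, (disj_eq_iff T items X i).1 h2⟩
  · rintro ⟨h1, h2⟩
    unfold bond
    rw [(conj_eq_iff T items X i).2 h1, (disj_eq_iff T items X i).2 h2]

lemma mem_fbond_iff {T : Finset τ} {items : τ → Finset ι} {I X : Finset ι} {i : ι} :
    i ∈ fbond T items I X ↔
      i ∈ X ∨ (i ∈ I ∧ i ∉ X ∧ bond T items (insert i X) = bond T items X) := by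
  simp [fbond, mem_union, mem_filter, mem_sdiff, and_assoc]

theorem stmt19 (T : Finset τ) (items : τ → Finset ι) (I : Finset ι)
    (hitems : ∀ t ∈ T, items t ⊆ I) :
    (∀ X : Finset ι, X ⊆ I → X ⊆ fbond T items I X) ∧
      (∀ X X' : Finset ι, X ⊆ X' → X' ⊆ I → X.Nonempty → 0 < suppConj T items X' →
        fbond T items I X ⊆ fbond T items I X') ∧
        ∀ X : Finset ι, X ⊆ I → X.Nonempty → 0 < suppConj T items X →
          fbond T items I (fbond T items I X) = fbond T items I X := by
  refine ⟨fun X _ => subset_union_left, ?_, ?_⟩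
  · -- isotonie
    intro X X' hXX' hX'I hX hc'
    have hc : 0 < suppConj T items X := lt_of_lt_of_le hc' (suppConj_anti T items hXX')
    have hX' : X'.Nonempty := hX.mono hXX'
    intro i hi
    rcases mem_fbond_iff.1 hi with hiX | ⟨hiI, hiX, hb⟩
    · exact mem_fbond_iff.2 (Or.inl (hXX' hiX))
    · by_cases hiX' : i ∈ X'
      · exact mem_fbond_iff.2 (Or.inl hiX')
      · obtain ⟨h1, h2⟩ := (bond_eq_iff T items i hX hc).1 hb
        refine mem_fbond_iff.2 (Or.inr ⟨hiI, hiX', ?_⟩)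
        refine (bond_eq_iff T items i hX' hc').2 ⟨?_, ?_⟩
        · intro t ht hXt
          exact h1 t ht (hXX'.trans hXt)
        · intro t ht hit
          obtain ⟨x, hx⟩ := h2 t ht hit
          simp only [mem_inter] at hx
          exact ⟨x, mem_inter.2 ⟨hXX' hx.1, hx.2⟩⟩
  · -- idempotence
    intro X _ hX hc
    set Y := fbond T items I X with hY
    have hXY : X ⊆ Y := subset_union_left
    have hYne : Y.Nonempty := hX.mono hXY
    -- key: conj/disj facts transfer from X to Y
    have keyA : ∀ t ∈ T, X ⊆ items t → Y ⊆ items t := by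
      intro t ht hXt j hjY
      rcases mem_fbond_iff.1 hjY with hjX | ⟨_, _, hb⟩
      · exact hXt hjX
      · exact ((bond_eq_iff T items j hX hc).1 hb).1 t ht hXt
    have keyB : ∀ t ∈ T, (Y ∩ items t).Nonempty → (X ∩ items t).Nonempty := by
      intro t ht ⟨j, hj⟩
      simp only [mem_inter] at hj
      rcases mem_fbond_iff.1 hj.1 with hjX | ⟨_, _, hb⟩
      · exact ⟨j, mem_inter.2 ⟨hjX, hj.2⟩⟩
      · exact ((bond_eq_iff T items j hX hc).1 hb).2 t ht hj.2
    have hconjY : suppConj T items Y = suppConj T items X := by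
      unfold suppConj
      congr 1
      apply filter_congr
      intro t ht
      exact ⟨fun h => hXY.trans h, keyA t ht⟩
    have hcY : 0 < suppConj T items Y := hconjY ▸ hc
    apply Subset.antisymm _ subset_union_left
    intro i hi
    rcases mem_fbond_iff.1 hi with hiY | ⟨hiI, hiY, hb⟩
    · exact hiY
    · obtain ⟨h1, h2⟩ := (bond_eq_iff T items i hYne hcY).1 hb
      have hiX : i ∉ X := fun h => hiY (hXY h)
      refine mem_fbond_iff.2 (Or.inr ⟨hiI, hiX, ?_⟩)
      refine (bond_eq_iff T items i hX hc).2 ⟨?_, ?_⟩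
      · intro t ht hXt
        exact h1 t ht (keyA t ht hXt)
      · intro t ht hit
        exact keyB t ht (h2 t ht hit)
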